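/- Let S be a finite p-group, p odd, and let L ≤ S with 𝔛(S) ≤ L. Suppose R ⊴ L satisfies 𝔛(S) ≤ R, R ⊴ S, and [Ω₁(C_L(𝔛(S))), R; p-1] = 1. Then R ≤ 𝔛(S), hence R = 𝔛(S). -/

import Mathlib

/-- Iterated commutator of subgroups: `[A,B;0] = A`, `[A,B;k+1] = ⁅[A,B;k], B⁆`,
so `[A,B;1] = ⁅A,B⁆` and `[A,B;k] = [[A,B;k-1],B]`. -/
def iterCommutator {G : Type*} [Group G] (A B : Subgroup G) : ℕ → Subgroup G
  | 0 => A
  | k + 1 => ⁅iterCommutator A B k, B⁆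

/-- `Ω₁(P)`: the subgroup generated by the elements of `P` of order dividing `p`. -/
def Omega1 {G : Type*} [Group G] (p : ℕ) (P : Subgroup G) : Subgroup G :=
  Subgroup.closure {x | x ∈ P ∧ x ^ p = 1}

/-- Oliver's condition (∗) for a chain `⊥ = Q 0 ≤ Q 1 ≤ ⋯ ≤ Q n` of normal subgroups:
`[Ω₁(C_G(Q i)), Q (i+1); p-1] = 1` for all `i < n`. -/
def IsOliverChain {G : Type*} [Group G] (p : ℕ) (Q : ℕ → Subgroup G) (n : ℕ) : Prop :=
  Q 0 = ⊥ ∧ (∀ i < n, Q i ≤ Q (i + 1)) ∧ (∀ i ≤ n, (Q i).Normal) ∧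
    ∀ i < n,
      iterCommutator (Omega1 p (Subgroup.centralizer (Q i : Set G))) (Q (i + 1)) (p - 1) = ⊥

/-- A (normal) subgroup `K` admits a chain witnessing Oliver's condition (∗). -/
def HasOliverChain {G : Type*} [Group G] (p : ℕ) (K : Subgroup G) : Prop :=
  ∃ n Q, IsOliverChain p Q n ∧ Q n = K

/-- The Oliver subgroup `𝔛(G)`: the largest normal subgroup of `G` admitting a chain of
`G`-normal subgroups satisfying Oliver's condition (∗). -/
def OliverSubgroup (p : ℕ) (G : Type*) [Group G] : Subgroup G :=
  sSup {K | HasOliverChain p K}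

/-- `E` is an elementary abelian `p`-subgroup. -/
def IsElemAbelian {G : Type*} [Group G] (p : ℕ) (E : Subgroup G) : Prop :=
  (∀ a ∈ E, ∀ b ∈ E, a * b = b * a) ∧ ∀ x ∈ E, x ^ p = 1

/-- The rank of a finite elementary abelian `p`-subgroup `E` (so `|E| = p ^ elemRank p E`). -/
noncomputable def elemRank {G : Type*} [Group G] (p : ℕ) (E : Subgroup G) : ℕ :=
  (Nat.card E).factorization p

/-- The `p`-rank of `G`: the maximal rank of an elementary abelian `p`-subgroup. -/
noncomputable def pRank (p : ℕ) (G : Type*) [Group G] : ℕ :=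
  sSup {n | ∃ E : Subgroup G, IsElemAbelian p E ∧ elemRank p E = n}

/-- The Thompson subgroup `J(G)`, generated by all elementary abelian `p`-subgroups of
rank equal to the `p`-rank of `G`. -/
def Thompson (p : ℕ) (G : Type*) [Group G] : Subgroup G :=
  sSup {E | IsElemAbelian p E ∧ elemRank p E = pRank p G}

section Helpers

open scoped commutatorElement

variable {G : Type*} [Group G]

lemma omega1_le (p : ℕ) (P : Subgroup G) : Omega1 p P ≤ P :=
  (Subgroup.closure_le P).mpr fun _ hx => hx.1

lemma omega1_mono (p : ℕ) {P P' : Subgroup G} (h : P ≤ P') : Omega1 p P ≤ Omega1 p P' :=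
  Subgroup.closure_mono fun _ hx => ⟨h hx.1, hx.2⟩

lemma centralizer_normal {K : Subgroup G} (hK : K.Normal) :
    (Subgroup.centralizer (K : Set G)).Normal := by
  constructor
  intro n hn g
  rw [Subgroup.mem_centralizer_iff] at hn ⊢
  intro h hh
  have h1 : (g⁻¹ * h * g) * n = n * (g⁻¹ * h * g) :=
    hn _ (by simpa using hK.conj_mem h hh g⁻¹)
  have h2 := congrArg (fun y => g * y * g⁻¹) h1
  simp only [mul_assoc, mul_inv_cancel_left, inv_mul_cancel_left] at h2
  simp [mul_assoc, h2]

lemma omega1_normal (p : ℕ) {P : Subgroup G} (hP : P.Normal) : (Omega1 p P).Normal := by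
  constructor
  intro n hn g
  induction hn using Subgroup.closure_induction with
  | mem x hx =>
      refine Subgroup.subset_closure ⟨hP.conj_mem x hx.1 g, ?_⟩
      rw [conj_pow, hx.2, mul_one, mul_inv_cancel]
  | one => simpa using (Omega1 p P).one_mem
  | mul x y hx hy ihx ihy =>
      have h : g * (x * y) * g⁻¹ = (g * x * g⁻¹) * (g * y * g⁻¹) := by group
      rw [h]; exact mul_mem ihx ihy
  | inv x hx ihx =>
      have h : g * x⁻¹ * g⁻¹ = (g * x * g⁻¹)⁻¹ := by group
      rw [h]; exact inv_mem ihx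

lemma commutator_le_normal {A N : Subgroup G} (B : Subgroup G) (hN : N.Normal) (h : A ≤ N) :
    ⁅A, B⁆ ≤ N := by
  haveI := hN
  exact (Subgroup.commutator_mono h le_rfl).trans (Subgroup.commutator_le_left N B)

lemma commutator_sup_le_of_centralizer {A B K D : Subgroup G}
    (hA : A ≤ Subgroup.centralizer (K : Set G)) (hD : D.Normal) (hAB : ⁅A, B⁆ ≤ D) :
    ⁅A, B ⊔ K⁆ ≤ D := by
  rw [Subgroup.commutator_le]
  intro a ha g hg
  have hg' : g ∈ Subgroup.closure ((B : Set G) ∪ (K : Set G)) := by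
    rwa [Subgroup.closure_union, Subgroup.closure_eq, Subgroup.closure_eq]
  clear hg
  induction hg' using Subgroup.closure_induction with
  | mem x hx =>
      rcases hx with hx | hx
      · exact hAB (Subgroup.commutator_mem_commutator ha hx)
      · have hc : ⁅a, x⁆ = 1 := commutatorElement_eq_one_iff_commute.mpr
          ((Subgroup.mem_centralizer_iff.mp (hA ha)) x hx).symm
        rw [hc]; exact D.one_mem
  | one => rw [commutatorElement_one_right]; exact D.one_mem
  | mul x y hx hy ihx ihy =>
      have h : ⁅a, x * y⁆ = ⁅a, x⁆ * (x * ⁅a, y⁆ * x⁻¹) := by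
        simp only [commutatorElement_def]; group
      rw [h]; exact mul_mem ihx (hD.conj_mem _ ihy x)
  | inv x hx ihx =>
      have h : ⁅a, x⁻¹⁆ = x⁻¹ * ⁅a, x⁆⁻¹ * (x⁻¹)⁻¹ := by
        simp only [commutatorElement_def]; group
      rw [h]; exact hD.conj_mem _ (inv_mem ihx) x⁻¹

lemma iterCommutator_mono {A A' B B' : Subgroup G} (hA : A ≤ A') (hB : B ≤ B') :
    ∀ k, iterCommutator A B k ≤ iterCommutator A' B' k
  | 0 => hA
  | k + 1 => Subgroup.commutator_mono (iterCommutator_mono hA hB k) hB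

lemma iterCommutator_normal {A B : Subgroup G} (hA : A.Normal) (hB : B.Normal) :
    ∀ k, (iterCommutator A B k).Normal
  | 0 => hA
  | k + 1 => by
      haveI := iterCommutator_normal hA hB k
      haveI := hB
      exact Subgroup.commutator_normal _ _

lemma iterCommutator_eq_bot_of_le {A B : Subgroup G} {k m : ℕ}
    (h : iterCommutator A B k = ⊥) (hkm : k ≤ m) : iterCommutator A B m = ⊥ := by
  induction m, hkm using Nat.le_induction with
  | base => exact h
  | succ m hm ih =>
      show ⁅iterCommutator A B m, B⁆ = ⊥
      rw [ih, Subgroup.commutator_bot_left]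

lemma iterCommutator_sup_le {X X' B K : Subgroup G} (hXX' : X ≤ X')
    (hXK : X ≤ Subgroup.centralizer (K : Set G)) (hK : K.Normal) (hX' : X'.Normal)
    (hB : B.Normal) : ∀ k, iterCommutator X (B ⊔ K) k ≤
      iterCommutator X' B k ⊓ Subgroup.centralizer (K : Set G)
  | 0 => le_inf hXX' hXK
  | k + 1 => by
      have ih := iterCommutator_sup_le hXX' hXK hK hX' hB k
      haveI hY'n : (iterCommutator X' B k).Normal := iterCommutator_normal hX' hB k
      haveI := hB
      have hD : (⁅iterCommutator X' B k, B⁆).Normal := Subgroup.commutator_normal _ _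
      refine le_inf ?_ ?_
      · exact commutator_sup_le_of_centralizer (ih.trans inf_le_right) hD
          (Subgroup.commutator_mono (ih.trans inf_le_left) le_rfl)
      · exact commutator_le_normal _ (centralizer_normal hK) (ih.trans inf_le_right)

end Helpers

section Chains

variable {G : Type*} [Group G] {p : ℕ}

lemma hasOliverChain_bot (p : ℕ) : HasOliverChain p (⊥ : Subgroup G) :=
  ⟨0, fun _ => ⊥, ⟨rfl, fun i hi => absurd hi (Nat.not_lt_zero i),
    fun _ _ => inferInstance, fun i hi => absurd hi (Nat.not_lt_zero i)⟩, rfl⟩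

lemma hasOliverChain_normal {K : Subgroup G} (h : HasOliverChain p K) : K.Normal := by
  obtain ⟨n, Q, ⟨_, _, hn, _⟩, hend⟩ := h
  exact hend ▸ hn n le_rfl

lemma hasOliverChain_extend {K Q : Subgroup G} (hK : HasOliverChain p K)
    (hKQ : K ≤ Q) (hQ : Q.Normal)
    (hc : iterCommutator (Omega1 p (Subgroup.centralizer (K : Set G))) Q (p - 1) = ⊥) :
    HasOliverChain p Q := by
  obtain ⟨n, Qc, ⟨h0, hmono, hnorm, hcm⟩, hend⟩ := hK
  refine ⟨n + 1, fun i => if i ≤ n then Qc i else Q, ⟨?_, ?_, ?_, ?_⟩, ?_⟩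
  · simpa using h0
  · intro i hi
    have h1 : i ≤ n := by omega
    by_cases h2 : i + 1 ≤ n
    · simpa [h1, h2] using hmono i (by omega)
    · have h3 : i = n := by omega
      subst h3
      simp only [h1, if_pos, h2, if_neg]
      exact hend ▸ hKQ
  · intro i _
    by_cases h : i ≤ n
    · simpa [h] using hnorm i h
    · simpa [h] using hQ
  · intro i hi
    have h1 : i ≤ n := by omega
    by_cases h2 : i + 1 ≤ n
    · simpa [h1, h2] using hcm i (by omega)
    · have h3 : i = n := by omega
      subst h3
      simp only [h1, if_pos, h2, if_neg]
      rw [hend]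
      exact hc
  · simp

lemma hasOliverChain_sup {K1 K2 : Subgroup G}
    (h1 : HasOliverChain p K1) (h2 : HasOliverChain p K2) :
    HasOliverChain p (K1 ⊔ K2) := by
  obtain ⟨n1, Q1, ⟨h10, h1m, h1n, h1c⟩, h1e⟩ := h1
  obtain ⟨n2, Q2, ⟨h20, h2m, h2n, h2c⟩, h2e⟩ := h2
  have hK1n : K1.Normal := h1e ▸ h1n n1 le_rfl
  -- key step lemma
  have key : ∀ j < n2, iterCommutator
      (Omega1 p (Subgroup.centralizer ((K1 ⊔ Q2 j : Subgroup G) : Set G)))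
      (K1 ⊔ Q2 (j + 1)) (p - 1) = ⊥ := by
    intro j hj
    have hsub : (Q2 j : Set G) ⊆ ((K1 ⊔ Q2 j : Subgroup G) : Set G) := by
      exact_mod_cast SetLike.coe_subset_coe.mpr le_sup_right
    have hXX' : Omega1 p (Subgroup.centralizer ((K1 ⊔ Q2 j : Subgroup G) : Set G)) ≤
        Omega1 p (Subgroup.centralizer ((Q2 j : Subgroup G) : Set G)) :=
      omega1_mono p (Subgroup.centralizer_le hsub)
    have hXK : Omega1 p (Subgroup.centralizer ((K1 ⊔ Q2 j : Subgroup G) : Set G)) ≤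
        Subgroup.centralizer (K1 : Set G) :=
      (omega1_le _ _).trans (Subgroup.centralizer_le
        (by exact_mod_cast SetLike.coe_subset_coe.mpr le_sup_left))
    have hX'n : (Omega1 p (Subgroup.centralizer ((Q2 j : Subgroup G) : Set G))).Normal :=
      omega1_normal p (centralizer_normal (h2n j hj.le))
    have hBn : (Q2 (j + 1)).Normal := h2n (j + 1) hj
    have := (iterCommutator_sup_le hXX' hXK hK1n hX'n hBn (p - 1)).trans inf_le_left
    rw [h2c j hj] at this
    rw [sup_comm K1 (Q2 (j + 1))]
    exact le_bot_iff.mp this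
  refine ⟨n1 + n2, fun i => if i ≤ n1 then Q1 i else K1 ⊔ Q2 (i - n1), ⟨?_, ?_, ?_, ?_⟩, ?_⟩
  · simpa using h10
  · intro i hi
    by_cases h2' : i + 1 ≤ n1
    · beta_reduce
      rw [if_pos (by omega : i ≤ n1), if_pos h2']
      exact h1m i (by omega)
    · by_cases h1' : i ≤ n1
      · have h3 : i = n1 := by omega
        beta_reduce
        rw [h3, if_pos le_rfl, if_neg (by omega : ¬ n1 + 1 ≤ n1), h1e]
        exact le_sup_left
      · beta_reduce
        rw [if_neg h1', if_neg h2', (by omega : i + 1 - n1 = (i - n1) + 1)]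
        exact sup_le_sup_left (h2m (i - n1) (by omega)) K1
  · intro i hi
    by_cases h : i ≤ n1
    · beta_reduce
      rw [if_pos h]; exact h1n i h
    · beta_reduce
      rw [if_neg h]
      haveI := hK1n
      haveI : (Q2 (i - n1)).Normal := h2n _ (by omega)
      exact Subgroup.sup_normal K1 (Q2 (i - n1))
  · intro i hi
    by_cases h2' : i + 1 ≤ n1
    · beta_reduce
      rw [if_pos (by omega : i ≤ n1), if_pos h2']
      exact h1c i (by omega)
    · by_cases h1' : i ≤ n1
      · have h3 : i = n1 := by omega
        beta_reduce
        rw [h3, if_pos le_rfl, if_neg (by omega : ¬ n1 + 1 ≤ n1),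
          (by omega : n1 + 1 - n1 = 1), h1e]
        have := key 0 (by omega)
        rwa [h20, sup_bot_eq] at this
      · beta_reduce
        rw [if_neg h1', if_neg h2', (by omega : i + 1 - n1 = (i - n1) + 1)]
        exact key (i - n1) (by omega)
  · by_cases h : n1 + n2 ≤ n1
    · have h5 : n2 = 0 := by omega
      subst h5
      beta_reduce
      rw [if_pos h, (by omega : n1 + 0 = n1), h1e, ← h2e, h20, sup_bot_eq]
    · beta_reduce
      rw [if_neg h, (by omega : n1 + n2 - n1 = n2), h2e]

end Chains

section Oliver

open scoped commutatorElement

variable {p : ℕ}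

lemma oliverSubgroup_hasChain (p : ℕ) (G : Type*) [Group G] [Finite G] :
    HasOliverChain p (OliverSubgroup p G) := by
  classical
  haveI : Finite (Subgroup G) :=
    Finite.of_injective (fun H : Subgroup G => (H : Set G)) SetLike.coe_injective
  set s : Set (Subgroup G) := {K | HasOliverChain p K} with hs
  obtain ⟨M, hM, hmax⟩ := Set.Finite.exists_maximalFor id s (Set.toFinite s)
    ⟨⊥, hasOliverChain_bot p⟩
  have hle : ∀ K ∈ s, K ≤ M := by
    intro K hK
    have hKM : K ⊔ M ∈ s := hasOliverChain_sup hK hM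
    have hMM : M = K ⊔ M := le_antisymm le_sup_right (hmax hKM le_sup_right)
    rw [hMM]
    exact le_sup_left
  have heq : OliverSubgroup p G = M := le_antisymm (sSup_le hle) (le_sSup hM)
  rw [heq]
  exact hM

lemma exists_center_inter [Fact p.Prime] {G : Type*} [Group G] [Finite G]
    (hG : IsPGroup p G) {N : Subgroup G} (hN : N.Normal) (hbot : N ≠ ⊥) :
    ∃ x, x ∈ N ∧ x ∈ Subgroup.center G ∧ x ≠ 1 := by
  haveI := hN
  have hG' : IsPGroup p (ConjAct G) := hG.of_equiv ConjAct.toConjAct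
  have hNp : IsPGroup p N := hG.to_subgroup N
  haveI hnt : Nontrivial N := (Subgroup.bot_or_nontrivial N).resolve_left hbot
  obtain ⟨n, hn0, hcard⟩ := hNp.nontrivial_iff_card.mp hnt
  have hdvd : p ∣ Nat.card N := hcard ▸ dvd_pow_self p hn0.ne'
  have h1fix : (1 : N) ∈ MulAction.fixedPoints (ConjAct G) N := by
    intro g; exact smul_one g
  obtain ⟨b, hb, hb1⟩ :=
    hG'.exists_fixed_point_of_prime_dvd_card_of_fixed_point (α := N) hdvd h1fix
  refine ⟨(b : G), b.2, ?_, ?_⟩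
  · rw [Subgroup.mem_center_iff]
    intro g
    have hfix := hb (ConjAct.toConjAct g)
    have hcoe : g * (b : G) * g⁻¹ = (b : G) := by
      have h := congrArg (Subtype.val) hfix
      rw [ConjAct.Subgroup.val_conj_smul] at h
      simpa [ConjAct.smul_def] using h
    calc g * (b : G) = (g * (b : G) * g⁻¹) * g := by group
    _ = (b : G) * g := by rw [hcoe]
  · intro h
    exact hb1 ((OneMemClass.coe_eq_one.mp h).symm)

lemma centralizer_oliver_le [Fact p.Prime] (hp : Odd p) {S : Type*} [Group S] [Finite S]
    (hS : IsPGroup p S) :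
    Subgroup.centralizer ((OliverSubgroup p S : Subgroup S) : Set S) ≤ OliverSubgroup p S := by
  classical
  set X := OliverSubgroup p S with hXdef
  have hXchain : HasOliverChain p X := oliverSubgroup_hasChain p S
  have hXnorm : X.Normal := hasOliverChain_normal hXchain
  haveI := hXnorm
  set C := Subgroup.centralizer (X : Set S) with hCdef
  by_contra hCX
  rw [SetLike.not_le_iff_exists] at hCX
  obtain ⟨c, hcC, hcX⟩ := hCX
  set π := QuotientGroup.mk' X with hπ
  have hπs : Function.Surjective π := QuotientGroup.mk'_surjective X
  set N := Subgroup.map π C with hN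
  have hNnorm : N.Normal := (centralizer_normal hXnorm).map π hπs
  have hNbot : N ≠ ⊥ := by
    intro h
    have hmem : π c ∈ N := Subgroup.mem_map_of_mem π hcC
    rw [h, Subgroup.mem_bot] at hmem
    exact hcX ((QuotientGroup.eq_one_iff c).mp hmem)
  have hquot : IsPGroup p (S ⧸ X) := hS.to_quotient X
  obtain ⟨w, hwN, hwZ, hw1⟩ := exists_center_inter hquot hNnorm hNbot
  obtain ⟨x, hxC, hxw⟩ := Subgroup.mem_map.mp hwN
  set Q := Subgroup.comap π (Subgroup.zpowers w) with hQ
  have hXQ : X ≤ Q := by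
    intro z hz
    rw [hQ, Subgroup.mem_comap]
    have h1 : π z = 1 := (QuotientGroup.eq_one_iff z).mpr hz
    rw [h1]
    exact one_mem _
  have hQnorm : Q.Normal := by
    have hzp : (Subgroup.zpowers w).Normal := by
      constructor
      intro n hn g
      have hnZ : n ∈ Subgroup.center (S ⧸ X) := by
        obtain ⟨k, hk⟩ := Subgroup.mem_zpowers_iff.mp hn
        exact hk ▸ (Subgroup.center (S ⧸ X)).zpow_mem hwZ k
      have hng : n * g = g * n := (Subgroup.mem_center_iff.mp hnZ g).symm
      have h2 : g * n * g⁻¹ = n := by rw [← hng, mul_assoc, mul_inv_cancel, mul_one]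
      rw [h2]
      exact hn
    exact hzp.comap π
  have hdec : ∀ g ∈ Q, ∃ z ∈ X, ∃ k : ℤ, g = z * x ^ k := by
    intro g hg
    rw [hQ, Subgroup.mem_comap, Subgroup.mem_zpowers_iff] at hg
    obtain ⟨k, hk⟩ := hg
    refine ⟨g * (x ^ k)⁻¹, ?_, k, by group⟩
    have hone : π (g * (x ^ k)⁻¹) = 1 := by
      rw [map_mul, map_inv, map_zpow, hxw, hk, mul_inv_cancel]
    exact (QuotientGroup.eq_one_iff _).mp hone
  have step1 : ⁅C, Q⁆ ≤ C ⊓ X := by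
    refine le_inf (commutator_le_normal _ (centralizer_normal hXnorm) le_rfl) ?_
    rw [Subgroup.commutator_le]
    intro a _ g hg
    have hgZ : π g ∈ Subgroup.center (S ⧸ X) := by
      rw [hQ, Subgroup.mem_comap] at hg
      exact Subgroup.zpowers_le.mpr hwZ hg
    have hone : π ⁅a, g⁆ = 1 := by
      rw [map_commutatorElement]
      exact commutatorElement_eq_one_iff_commute.mpr (Subgroup.mem_center_iff.mp hgZ (π a))
    exact (QuotientGroup.eq_one_iff _).mp hone
  have step2 : ⁅(C ⊓ X : Subgroup S), Q⁆ = ⊥ := by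
    rw [Subgroup.commutator_eq_bot_iff_le_centralizer]
    intro v hv
    rw [Subgroup.mem_centralizer_iff]
    intro g hg
    obtain ⟨z, hzX, k, rfl⟩ := hdec g hg
    have hvz : z * v = v * z := (Subgroup.mem_centralizer_iff.mp hv.1) z hzX
    have hvx : Commute v x := (Subgroup.mem_centralizer_iff.mp hxC) v hv.2
    have hvxk : v * x ^ k = x ^ k * v := hvx.zpow_right k
    rw [mul_assoc, ← hvxk, ← mul_assoc, hvz, mul_assoc]
  have hp3 : 3 ≤ p := by
    have h2 := (Fact.out : p.Prime).two_le
    rcases Nat.lt_or_ge p 3 with h | h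
    · interval_cases p
      · exact absurd hp (by decide)
    · exact h
  have hiter2 : iterCommutator (Omega1 p C) Q 2 = ⊥ := by
    have l1 : iterCommutator (Omega1 p C) Q 1 ≤ C ⊓ X :=
      (Subgroup.commutator_mono (omega1_le p C) le_rfl).trans step1
    show ⁅iterCommutator (Omega1 p C) Q 1, Q⁆ = ⊥
    exact le_bot_iff.mp ((Subgroup.commutator_mono l1 le_rfl).trans (le_of_eq step2))
  have hfinal : iterCommutator (Omega1 p C) Q (p - 1) = ⊥ :=
    iterCommutator_eq_bot_of_le hiter2 (by omega)
  have hQchain : HasOliverChain p Q := hasOliverChain_extend hXchain hXQ hQnorm hfinal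
  have hQle : Q ≤ X := le_sSup hQchain
  have hxQ : x ∈ Q := by
    rw [hQ, Subgroup.mem_comap, hxw]
    exact Subgroup.mem_zpowers w
  exact hw1 (by rw [← hxw]; exact (QuotientGroup.eq_one_iff x).mpr (hQle hxQ))

end Oliver


/-- core step of Theorems 1.2 and 1.5: let `𝔛(S) ≤ L ≤ S` and `R ⊴ L`
with `𝔛(S) ≤ R`, `R ⊴ S` and `[Ω₁(C_L(𝔛(S))), R; p-1] = 1`. Then `R ≤ 𝔛(S)`,
hence `R = 𝔛(S)`. -/
theorem core_step (p : ℕ) [Fact p.Prime] (hp : Odd p)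
    (S : Type*) [Group S] [Fintype S] (hS : IsPGroup p S)
    (L R : Subgroup S) (hXL : OliverSubgroup p S ≤ L)
    (hRL : R ≤ L) (hRnormL : (R.subgroupOf L).Normal)
    (hXR : OliverSubgroup p S ≤ R) (hRnorm : R.Normal)
    (hcomm : iterCommutator
        (Omega1 p (Subgroup.centralizer ((OliverSubgroup p S : Subgroup S) : Set S) ⊓ L))
        R (p - 1) = ⊥) :
    R ≤ OliverSubgroup p S ∧ R = OliverSubgroup p S := by
  have hXchain : HasOliverChain p (OliverSubgroup p S) := oliverSubgroup_hasChain p S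
  have hC : Subgroup.centralizer ((OliverSubgroup p S : Subgroup S) : Set S) ≤
      OliverSubgroup p S := centralizer_oliver_le hp hS
  have hCL : Subgroup.centralizer ((OliverSubgroup p S : Subgroup S) : Set S) ⊓ L
      = Subgroup.centralizer ((OliverSubgroup p S : Subgroup S) : Set S) :=
    inf_eq_left.mpr (hC.trans hXL)
  rw [hCL] at hcomm
  have hRchain : HasOliverChain p R := hasOliverChain_extend hXchain hXR hRnorm hcomm
  have hle : R ≤ OliverSubgroup p S := le_sSup hRchain
  exact ⟨hle, le_antisymm hle hXR⟩
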